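/- Let A, B ∈ ℝ² with A ≠ B, let ℓ = ‖B - A‖, and let M(t) = (1-t)A + tB. Let μ be the uniform probability measure on segment AB (pushforward of Lebesgue measure on [0,1] under M). For 0 ≤ r₁, with r₁ + r₂ < ℓ, the nth quantization error of μ restricted (conditioned) to the subsegment from M(r₁/ℓ) to M(1 - r₂/ℓ), with respect to the squared Euclidean distance, equals n · ∫ over t from r₁/ℓ to r₁/ℓ + (1/n)(1 - r₂/ℓ - r₁/ℓ) of ‖M(t) - M(r₁/ℓ + (1/(2n))(1 - r₂/ℓ - r₁/ℓ))‖² dt, and the set {M(r₁/ℓ + ((2j-1)/(2n))(1 - r₂/ℓ - r₁/ℓ)) : 1 ≤ j ≤ n} achieves this infimum. -/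

import Mathlib

open Real MeasureTheory

attribute [local instance] Classical.propDecidable


lemma qs_inf'_eq_iInf {ι : Type*} (s : Finset ι) (H : s.Nonempty) (f : ι → ℝ) :
    (⨅ a : s, f a) = s.inf' H f := by
  rw [Finset.inf'_eq_csInf_image, iInf]
  congr 1
  have h1 : (fun a : s => f ↑a) = f ∘ (Subtype.val) := rfl
  rw [h1, Set.range_comp, Subtype.range_coe_subtype]
  rfl

lemma qs_cont_inf' {ι X : Type*} [TopologicalSpace X] (s : Finset ι) (H : s.Nonempty)
    (f : ι → X → ℝ) (hf : ∀ i, Continuous (f i)) :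
    Continuous (fun x => s.inf' H (fun i => f i x)) := by
  induction H using Finset.Nonempty.cons_induction with
  | singleton i =>
      simp only [Finset.inf'_singleton]
      exact hf i
  | cons i s hi hs ih =>
      simp only [Finset.inf'_cons hs]
      exact (hf i).min ih

lemma qs_integral_sq (a b p : ℝ) :
    ∫ t in a..b, (t - p) ^ 2 = ((b - p) ^ 3 - (a - p) ^ 3) / 3 := by
  have h := intervalIntegral.integral_comp_sub_right (a := a) (b := b) (fun x => x ^ 2) p
  rw [h, integral_pow]
  norm_num

lemma qs_one_point (a b p : ℝ) (hab : a ≤ b) :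
    (b - a) ^ 3 / 12 ≤ ∫ t in a..b, (t - p) ^ 2 := by
  rw [qs_integral_sq]
  nlinarith [sq_nonneg (b + a - 2 * p), sq_nonneg (b - a), sub_nonneg.mpr hab,
    mul_nonneg (sub_nonneg.mpr hab) (sq_nonneg (b + a - 2 * p))]

lemma qs_key_ineq (X Y m : ℝ) (hX : 0 ≤ X) (hY : 0 ≤ Y) (hm : 1 ≤ m) :
    (X + Y) ^ 3 / (12 * (m + 1) ^ 2) ≤ X ^ 3 / (12 * m ^ 2) + Y ^ 3 / 12 := by
  rw [div_add_div _ _ (by positivity) (by norm_num),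
    div_le_div_iff₀ (by positivity) (by positivity)]
  nlinarith [mul_nonneg (sq_nonneg (X - m * Y))
    (add_nonneg (mul_nonneg (by linarith : (0:ℝ) ≤ 2 * m + 1) hX)
      (mul_nonneg (by nlinarith : (0:ℝ) ≤ m * (m + 2)) hY))]

lemma qs_one_dim : ∀ (m : ℕ) (P : Finset ℝ) (hP : P.Nonempty), P.card ≤ m →
    ∀ a b : ℝ, a ≤ b →
    (b - a) ^ 3 / (12 * (m : ℝ) ^ 2) ≤ ∫ t in a..b, P.inf' hP (fun p => (t - p) ^ 2) := by
  intro m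
  induction m with
  | zero =>
    intro P hP hcard
    exact absurd (Finset.card_pos.mpr hP) (by omega)
  | succ m ih =>
    intro P hP hcard a b hab
    have hgc : Continuous (fun t => P.inf' hP (fun p => (t - p) ^ 2)) :=
      qs_cont_inf' P hP _ (fun p => (continuous_id.sub continuous_const).pow 2)
    rcases lt_or_ge P.card (m + 1) with hlt | hge
    · have hm : 1 ≤ m := le_trans (Finset.card_pos.mpr hP) (by omega)
      refine le_trans ?_ (ih P hP (by omega) a b hab)
      have hm' : (1:ℝ) ≤ (m:ℝ) := by exact_mod_cast hm
      have h1 : ((m:ℝ) + 1) ^ 2 > 0 := by positivity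
      have h2 : (0:ℝ) < (m:ℝ) ^ 2 := by positivity
      have hba : (0:ℝ) ≤ (b - a) ^ 3 := pow_nonneg (by linarith) 3
      push_cast
      apply div_le_div_of_nonneg_left hba (by positivity)
      nlinarith
    · have hcard' : P.card = m + 1 := le_antisymm hcard hge
      rcases Nat.eq_zero_or_pos m with hm0 | hm
      · obtain ⟨p, rfl⟩ := Finset.card_eq_one.mp (by rw [hcard', hm0])
        simp only [Finset.inf'_singleton]
        subst hm0
        push_cast
        simpa using qs_one_point a b p hab
      · -- main step
        set p1 := P.max' hP with hp1def
        have hp1mem : p1 ∈ P := P.max'_mem hP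
        set P' := P.erase p1 with hP'def
        have hP'card : P'.card = m := by
          rw [hP'def, Finset.card_erase_of_mem hp1mem, hcard']
          omega
        have hP'ne : P'.Nonempty := Finset.card_pos.mp (by rw [hP'card]; exact hm)
        set p2 := P'.max' hP'ne with hp2def
        have hp2mem : p2 ∈ P' := P'.max'_mem hP'ne
        have hp2p1 : p2 ≤ p1 := P.le_max' _ (Finset.mem_of_mem_erase hp2mem)
        set c := max a (min b ((p1 + p2) / 2)) with hcdef
        have hac : a ≤ c := le_max_left _ _
        have hcb : c ≤ b := max_le hab (min_le_left _ _)
        have hint1 : IntervalIntegrable (fun t => P.inf' hP (fun p => (t - p) ^ 2)) volume a c :=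
          hgc.intervalIntegrable _ _
        have hint2 : IntervalIntegrable (fun t => P.inf' hP (fun p => (t - p) ^ 2)) volume c b :=
          hgc.intervalIntegrable _ _
        have hsplit := intervalIntegral.integral_add_adjacent_intervals hint1 hint2
        -- bound on [c, b]
        have hb2 : (b - c) ^ 3 / 12 ≤ ∫ t in c..b, P.inf' hP (fun p => (t - p) ^ 2) := by
          rcases eq_or_lt_of_le hcb with heq | hlt
          · rw [heq]
            simp
          · have hmidc : (p1 + p2) / 2 ≤ c := by
              rcases le_total ((p1 + p2) / 2) b with h | h
              · calc (p1 + p2) / 2 = min b ((p1 + p2) / 2) := (min_eq_right h).symm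
                  _ ≤ c := le_max_right _ _
              · exfalso
                have : b ≤ c := le_trans (by rw [min_eq_left h]) (le_max_right a _)
                linarith
            refine le_trans (qs_one_point c b p1 hcb) ?_
            refine intervalIntegral.integral_mono_on hcb
              (((continuous_sub_right p1).pow 2).intervalIntegrable c b) hint2 ?_
            intro t ht
            apply Finset.le_inf'
            intro p hp
            by_cases hpe : p = p1
            · rw [hpe]
            · have hpP' : p ∈ P' := Finset.mem_erase.mpr ⟨hpe, hp⟩
              have hpp2 : p ≤ p2 := P'.le_max' p hpP'
              have htc : c ≤ t := ht.1
              nlinarith [hp2p1, hpp2, htc, hmidc]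
        -- bound on [a, c]
        have ha2 : (c - a) ^ 3 / (12 * (m : ℝ) ^ 2) ≤
            ∫ t in a..c, P.inf' hP (fun p => (t - p) ^ 2) := by
          rcases eq_or_lt_of_le hac with heq | hlt
          · rw [← heq]
            simp
          · have hcmid : c ≤ (p1 + p2) / 2 := by
              have h1 : a < min b ((p1 + p2) / 2) := by
                by_contra h
                push_neg at h
                have : c = a := max_eq_left h
                linarith
              calc c = min b ((p1 + p2) / 2) := max_eq_right h1.le
                _ ≤ (p1 + p2) / 2 := min_le_right _ _
            refine le_trans (ih P' hP'ne (le_of_eq hP'card) a c hac) ?_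
            refine intervalIntegral.integral_mono_on hac
              ((qs_cont_inf' P' hP'ne _ (fun p => (continuous_id.sub continuous_const).pow 2)).intervalIntegrable _ _)
              hint1 ?_
            intro t ht
            apply Finset.le_inf'
            intro p hp
            by_cases hpe : p = p1
            · refine le_trans (Finset.inf'_le _ hp2mem) ?_
              rw [hpe]
              have htc : t ≤ c := ht.2
              nlinarith [hp2p1, htc, hcmid]
            · exact Finset.inf'_le _ (Finset.mem_erase.mpr ⟨hpe, hp⟩)
        have hm' : (1:ℝ) ≤ (m:ℝ) := by exact_mod_cast hm
        have hkey := qs_key_ineq (c - a) (b - c) m (by linarith) (by linarith) hm'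
        push_cast
        calc (b - a) ^ 3 / (12 * ((m:ℝ) + 1) ^ 2)
            = ((c - a) + (b - c)) ^ 3 / (12 * ((m:ℝ) + 1) ^ 2) := by ring_nf
          _ ≤ (c - a) ^ 3 / (12 * (m:ℝ) ^ 2) + (b - c) ^ 3 / 12 := hkey
          _ ≤ _ := by rw [← hsplit]; linarith [ha2, hb2]

lemma qs_min_cell (t0 u : ℝ) (hu : 0 < u) (i : ℕ) (t : ℝ)
    (h1 : t0 + (i : ℝ) * u ≤ t) (h2 : t ≤ t0 + ((i : ℝ) + 1) * u) (j : ℕ) (hj1 : 1 ≤ j) :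
    (t - (t0 + ((i : ℝ) + 1) * u - u / 2)) ^ 2 ≤ (t - (t0 + (j : ℝ) * u - u / 2)) ^ 2 := by
  have hj1' : (1:ℝ) ≤ (j:ℝ) := by exact_mod_cast hj1
  rcases lt_trichotomy j (i + 1) with hlt | heq' | hgt
  · have hji : (j:ℝ) ≤ (i:ℝ) := by exact_mod_cast Nat.lt_succ_iff.mp hlt
    apply sq_le_sq'
    · nlinarith
    · nlinarith
  · rw [heq']; push_cast; exact le_rfl
  · have hji : (i:ℝ) + 2 ≤ (j:ℝ) := by exact_mod_cast hgt
    calc (t - (t0 + ((i : ℝ) + 1) * u - u / 2)) ^ 2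
        ≤ ((t0 + (j : ℝ) * u - u / 2) - t) ^ 2 := by
          apply sq_le_sq'
          · nlinarith
          · nlinarith
      _ = (t - (t0 + (j : ℝ) * u - u / 2)) ^ 2 := by ring

lemma qs_proj {E : Type*} [NormedAddCommGroup E] [InnerProductSpace ℝ E]
    (A B : E) (ℓ : ℝ) (hℓpos : 0 < ℓ) (hℓ : ℓ = ‖B - A‖) (t : ℝ) (a : E) :
    ℓ ^ 2 * (t - (inner ℝ (a - A) (B - A) : ℝ) / ℓ ^ 2) ^ 2
      ≤ ‖((1 - t) • A + t • B) - a‖ ^ 2 := by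
  set p : ℝ := (inner ℝ (a - A) (B - A) : ℝ) / ℓ ^ 2 with hp
  have hv : (inner ℝ (B - A) (B - A) : ℝ) = ℓ ^ 2 := by
    rw [real_inner_self_eq_norm_sq, hℓ]
  have hdecomp : ((1 - t) • A + t • B) - a = (A - a) + t • (B - A) := by module
  have hneg : (inner ℝ (A - a) (B - A) : ℝ) = - (inner ℝ (a - A) (B - A) : ℝ) := by
    rw [show A - a = -(a - A) by abel, inner_neg_left]
  have hip : (inner ℝ (((1 - t) • A + t • B) - a) (B - A) : ℝ) = (t - p) * ℓ ^ 2 := by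
    rw [hdecomp, inner_add_left, real_inner_smul_left, hv, hneg, hp]
    field_simp
    ring
  have hcs := real_inner_mul_inner_self_le (((1 - t) • A + t • B) - a) (B - A)
  rw [hip, hv, real_inner_self_eq_norm_sq] at hcs
  nlinarith [mul_pos hℓpos hℓpos, sq_nonneg (t - p), hcs]

/-- Theorem 1 of the paper: for the uniform distribution on a segment `AB` restricted to
the subsegment from `M(r₁/ℓ)` to `M(1 - r₂/ℓ)` (where `M(t) = (1-t)A + tB` and
`ℓ = ‖B - A‖`), the `n`th quantization error equals
`n ∫_{r₁/ℓ}^{r₁/ℓ + (1/n)(1 - r₂/ℓ - r₁/ℓ)} ‖M(t) - M(r₁/ℓ + (1/(2n))(1 - r₂/ℓ - r₁/ℓ))‖² dt`,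
and the infimum is achieved by `{M(r₁/ℓ + ((2j-1)/(2n))(1 - r₂/ℓ - r₁/ℓ)) : 1 ≤ j ≤ n}`. -/
theorem quantization_uniform_subsegment
    (A B : EuclideanSpace ℝ (Fin 2)) (hAB : A ≠ B) (ℓ r₁ r₂ : ℝ)
    (hℓ : ℓ = ‖B - A‖) (hr₁ : 0 ≤ r₁) (hr₂ : 0 ≤ r₂) (hr : r₁ + r₂ < ℓ)
    (M : ℝ → EuclideanSpace ℝ (Fin 2)) (hM : ∀ t, M t = (1 - t) • A + t • B)
    (n : ℕ) (hn : 1 ≤ n)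
    (μ : Measure (EuclideanSpace ℝ (Fin 2)))
    (hμ : μ = Measure.map M (volume.restrict (Set.Icc (r₁ / ℓ) (1 - r₂ / ℓ)))) :
    (∫ x, (⨅ a : ((Finset.Icc 1 n).image
          (fun j : ℕ => M (r₁ / ℓ + (2 * (j : ℝ) - 1) / (2 * n) * (1 - r₂ / ℓ - r₁ / ℓ))) :
          Finset (EuclideanSpace ℝ (Fin 2))),
        ‖x - (a : EuclideanSpace ℝ (Fin 2))‖ ^ 2) ∂μ)
      = n * ∫ t in Set.Icc (r₁ / ℓ) (r₁ / ℓ + (1 / n) * (1 - r₂ / ℓ - r₁ / ℓ)),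
          ‖M t - M (r₁ / ℓ + (1 / (2 * n)) * (1 - r₂ / ℓ - r₁ / ℓ))‖ ^ 2 ∧
    ∀ α : Finset (EuclideanSpace ℝ (Fin 2)), α.Nonempty → α.card ≤ n →
      (n : ℝ) * ∫ t in Set.Icc (r₁ / ℓ) (r₁ / ℓ + (1 / n) * (1 - r₂ / ℓ - r₁ / ℓ)),
          ‖M t - M (r₁ / ℓ + (1 / (2 * n)) * (1 - r₂ / ℓ - r₁ / ℓ))‖ ^ 2
        ≤ ∫ x, (⨅ a : α, ‖x - (a : EuclideanSpace ℝ (Fin 2))‖ ^ 2) ∂μ := by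
  have hℓpos : 0 < ℓ := hℓ ▸ norm_pos_iff.mpr (sub_ne_zero.mpr (Ne.symm hAB))
  have hnpos : (0:ℝ) < n := by exact_mod_cast hn
  set t0 : ℝ := r₁ / ℓ with ht0
  set t1 : ℝ := 1 - r₂ / ℓ with ht1
  set S : ℝ := 1 - r₂ / ℓ - r₁ / ℓ with hSdef
  have hS : 0 < S := by
    have h1 : (r₁ + r₂) / ℓ < 1 := (div_lt_one hℓpos).mpr hr
    have h2 : (r₁ + r₂) / ℓ = r₁ / ℓ + r₂ / ℓ := add_div _ _ _
    rw [hSdef]; linarith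
  have ht01 : t0 ≤ t1 := by rw [ht0, ht1]; rw [hSdef] at hS; linarith
  have htS : t1 - t0 = S := by simp only [ht0, ht1, hSdef]
  clear_value t0 t1 S
  -- basic facts about M
  have hMsub : ∀ t u : ℝ, M t - M u = (t - u) • (B - A) := by
    intro t u; rw [hM, hM]; module
  have hMnorm : ∀ t u : ℝ, ‖M t - M u‖ ^ 2 = ℓ ^ 2 * (t - u) ^ 2 := by
    intro t u
    rw [hMsub, norm_smul, Real.norm_eq_abs, mul_pow, sq_abs, ← hℓ]; ring
  have hMcont : Continuous M := by
    have : M = fun t => (1 - t) • A + t • B := funext hM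
    rw [this]; fun_prop
  -- generic pushforward integral
  have hmap : ∀ f : EuclideanSpace ℝ (Fin 2) → ℝ, Continuous f →
      ∫ x, f x ∂μ = ∫ t in Set.Icc t0 t1, f (M t) := by
    intro f hf
    rw [hμ, integral_map hMcont.aemeasurable hf.aestronglyMeasurable]
  -- value of the right-hand side
  have hmono_t : t0 ≤ t0 + (1 / n) * S := by
    have : 0 < (1 / (n:ℝ)) * S := by positivity
    linarith
  have hRHScalc : (n:ℝ) * ∫ t in Set.Icc t0 (t0 + (1 / n) * S),
      ‖M t - M (t0 + (1 / (2 * n)) * S)‖ ^ 2 = ℓ ^ 2 * S ^ 3 / (12 * n ^ 2) := by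
    rw [integral_Icc_eq_integral_Ioc, ← intervalIntegral.integral_of_le hmono_t]
    rw [intervalIntegral.integral_congr
      (g := fun t => ℓ ^ 2 * (t - (t0 + (1 / (2 * n)) * S)) ^ 2)
      (fun t _ => hMnorm t _)]
    rw [intervalIntegral.integral_const_mul, qs_integral_sq]
    have hne : (n:ℝ) ≠ 0 := ne_of_gt hnpos
    field_simp
    ring
  constructor
  · -- Part 1
    set g : ℕ → EuclideanSpace ℝ (Fin 2) :=
      fun j : ℕ => M (t0 + (2 * (j : ℝ) - 1) / (2 * n) * S) with hg
    set αstar : Finset (EuclideanSpace ℝ (Fin 2)) := (Finset.Icc 1 n).image g with hαstar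
    have hIccne : (Finset.Icc 1 n).Nonempty := ⟨1, by simp [hn]⟩
    have Hne : αstar.Nonempty := hIccne.image g
    set u : ℝ := S / n with hu
    have hupos : 0 < u := by positivity
    set c : ℕ → ℝ := fun j => t0 + (j : ℝ) * u - u / 2 with hc
    have hcg : ∀ j : ℕ, t0 + (2 * (j : ℝ) - 1) / (2 * n) * S = c j := by
      intro j
      have hne : (n:ℝ) ≠ 0 := ne_of_gt hnpos
      rw [hc, hu]
      field_simp
      ring
    have e1 : (fun x : EuclideanSpace ℝ (Fin 2) => ⨅ a : αstar, ‖x - (a : EuclideanSpace ℝ (Fin 2))‖ ^ 2)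
        = fun x => αstar.inf' Hne (fun a => ‖x - a‖ ^ 2) :=
      funext fun x => qs_inf'_eq_iInf αstar Hne (fun a => ‖x - a‖ ^ 2)
    have hcont1 : Continuous (fun x : EuclideanSpace ℝ (Fin 2) =>
        ⨅ a : αstar, ‖x - (a : EuclideanSpace ℝ (Fin 2))‖ ^ 2) := by
      rw [e1]
      exact qs_cont_inf' αstar Hne (fun a x => ‖x - a‖ ^ 2)
        (fun a => ((continuous_id.sub continuous_const).norm).pow 2)
    have step1 : (∫ x, (⨅ a : αstar, ‖x - (a : EuclideanSpace ℝ (Fin 2))‖ ^ 2) ∂μ)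
        = ∫ t in Set.Icc t0 t1, (⨅ a : αstar, ‖M t - (a : EuclideanSpace ℝ (Fin 2))‖ ^ 2) :=
      hmap _ hcont1
    have e2 : ∀ t : ℝ, (⨅ a : αstar, ‖M t - (a : EuclideanSpace ℝ (Fin 2))‖ ^ 2)
        = (Finset.Icc 1 n).inf' hIccne (fun j => ℓ ^ 2 * (t - c j) ^ 2) := by
      intro t
      rw [qs_inf'_eq_iInf αstar Hne (fun a => ‖M t - a‖ ^ 2)]
      have himg : αstar.inf' Hne (fun a => ‖M t - a‖ ^ 2)
          = (Finset.Icc 1 n).inf' hIccne ((fun a => ‖M t - a‖ ^ 2) ∘ g) :=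
        Finset.inf'_image _ _
      rw [himg]
      apply Finset.inf'_congr hIccne rfl
      intro j hj
      simp only [Function.comp, hg]
      rw [hMnorm, hcg]
    have hcont2 : Continuous (fun t : ℝ =>
        (Finset.Icc 1 n).inf' hIccne (fun j => ℓ ^ 2 * (t - c j) ^ 2)) :=
      qs_cont_inf' _ hIccne (fun j t => ℓ ^ 2 * (t - c j) ^ 2)
        (fun j => continuous_const.mul ((continuous_sub_right _).pow 2))
    set F : ℕ → ℝ := fun i => t0 + (i : ℝ) * u with hF
    clear_value u c F
    have hFstep : ∀ i : ℕ, F i ≤ F (i + 1) := by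
      intro i
      rw [hF]
      push_cast
      nlinarith [hupos]
    have hFn : F n = t1 := by
      rw [hF, hu, ht1, hSdef, ht0]
      field_simp
      ring
    have hsum := intervalIntegral.sum_integral_adjacent_intervals (a := F) (n := n) (μ := volume)
      (f := fun t => (Finset.Icc 1 n).inf' hIccne fun j => ℓ ^ 2 * (t - c j) ^ 2)
      (fun k _ => hcont2.intervalIntegrable _ _)
    have hpiece : ∀ i : ℕ, i < n →
        (∫ t in (F i)..(F (i + 1)),
          (Finset.Icc 1 n).inf' hIccne (fun j => ℓ ^ 2 * (t - c j) ^ 2))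
        = ℓ ^ 2 * u ^ 3 / 12 := by
      intro i hi
      have heq : Set.EqOn
          (fun t => (Finset.Icc 1 n).inf' hIccne (fun j => ℓ ^ 2 * (t - c j) ^ 2))
          (fun t => ℓ ^ 2 * (t - c (i + 1)) ^ 2) (Set.uIcc (F i) (F (i + 1))) := by
        intro t ht
        rw [Set.uIcc_of_le (hFstep i)] at ht
        obtain ⟨ht1', ht2'⟩ := ht
        apply le_antisymm
        · apply Finset.inf'_le
          simp only [Finset.mem_Icc]
          omega
        · apply Finset.le_inf'
          intro j hj
          rw [Finset.mem_Icc] at hj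
          apply mul_le_mul_of_nonneg_left _ (sq_nonneg ℓ)
          simp only [hc, hF] at ht1' ht2' ⊢
          push_cast at ht1' ht2' ⊢
          exact qs_min_cell t0 u hupos i t ht1' ht2' j hj.1
      rw [intervalIntegral.integral_congr heq, intervalIntegral.integral_const_mul,
        qs_integral_sq]
      rw [hc, hF]
      push_cast
      ring
    have hsum2 : ∀ i ∈ Finset.range n,
        (∫ t in (F i)..(F (i + 1)),
          (Finset.Icc 1 n).inf' hIccne (fun j => ℓ ^ 2 * (t - c j) ^ 2))
        = ℓ ^ 2 * u ^ 3 / 12 := fun i hi => hpiece i (Finset.mem_range.mp hi)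
    have htotal : (∫ t in t0..t1,
        (Finset.Icc 1 n).inf' hIccne (fun j => ℓ ^ 2 * (t - c j) ^ 2))
        = (n:ℝ) * (ℓ ^ 2 * u ^ 3 / 12) := by
      have hF0 : F 0 = t0 := by rw [hF]; push_cast; ring
      rw [← hF0, ← hFn, ← hsum, Finset.sum_congr rfl hsum2, Finset.sum_const,
        Finset.card_range, nsmul_eq_mul]
    rw [step1]
    have e2' : (∫ t in Set.Icc t0 t1, (⨅ a : αstar, ‖M t - (a : EuclideanSpace ℝ (Fin 2))‖ ^ 2))
        = ∫ t in Set.Icc t0 t1,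
            (Finset.Icc 1 n).inf' hIccne (fun j => ℓ ^ 2 * (t - c j) ^ 2) := by
      apply integral_congr_ae
      filter_upwards with t using e2 t
    rw [e2', integral_Icc_eq_integral_Ioc, ← intervalIntegral.integral_of_le ht01, htotal,
      hRHScalc]
    rw [hu]
    have hne : (n:ℝ) ≠ 0 := ne_of_gt hnpos
    field_simp
  · -- Part 2
    intro α Hne hcard
    rw [hRHScalc]
    set pa : EuclideanSpace ℝ (Fin 2) → ℝ :=
      fun a => (inner ℝ (a - A) (B - A) : ℝ) / ℓ ^ 2 with hpa
    set P : Finset ℝ := α.image pa with hP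
    have hPne : P.Nonempty := Hne.image pa
    have hPcard : P.card ≤ n := le_trans (Finset.card_image_le) hcard
    clear_value pa P
    have hproj : ∀ (t : ℝ) (a : EuclideanSpace ℝ (Fin 2)),
        ℓ ^ 2 * (t - pa a) ^ 2 ≤ ‖M t - a‖ ^ 2 := by
      intro t a
      simp only [hM, hpa]
      exact qs_proj A B ℓ hℓpos hℓ t a
    have e1 : (fun x : EuclideanSpace ℝ (Fin 2) => ⨅ a : α, ‖x - (a : EuclideanSpace ℝ (Fin 2))‖ ^ 2)
        = fun x => α.inf' Hne (fun a => ‖x - a‖ ^ 2) :=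
      funext fun x => qs_inf'_eq_iInf α Hne (fun a => ‖x - a‖ ^ 2)
    have hcont1 : Continuous (fun x : EuclideanSpace ℝ (Fin 2) =>
        ⨅ a : α, ‖x - (a : EuclideanSpace ℝ (Fin 2))‖ ^ 2) := by
      rw [e1]
      exact qs_cont_inf' α Hne (fun a x => ‖x - a‖ ^ 2)
        (fun a => ((continuous_id.sub continuous_const).norm).pow 2)
    rw [hmap _ hcont1]
    have hcontP : Continuous (fun t : ℝ => ℓ ^ 2 * P.inf' hPne (fun q => (t - q) ^ 2)) :=
      continuous_const.mul (qs_cont_inf' P hPne _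
        (fun q => (continuous_sub_right _).pow 2))
    have hcontα : Continuous (fun t : ℝ => α.inf' Hne (fun a => ‖M t - a‖ ^ 2)) :=
      qs_cont_inf' α Hne (fun a t => ‖M t - a‖ ^ 2)
        (fun a => ((hMcont.sub continuous_const).norm).pow 2)
    have hmono : (∫ t in t0..t1, ℓ ^ 2 * P.inf' hPne (fun q => (t - q) ^ 2))
        ≤ ∫ t in t0..t1, α.inf' Hne (fun a => ‖M t - a‖ ^ 2) := by
      apply intervalIntegral.integral_mono_on ht01
        (hcontP.intervalIntegrable _ _) (hcontα.intervalIntegrable _ _)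
      intro t ht
      apply Finset.le_inf'
      intro a ha
      refine le_trans ?_ (hproj t a)
      apply mul_le_mul_of_nonneg_left _ (sq_nonneg ℓ)
      have hmem : pa a ∈ P := by rw [hP]; exact Finset.mem_image_of_mem pa ha
      exact Finset.inf'_le _ hmem
    have hlow : ℓ ^ 2 * ((t1 - t0) ^ 3 / (12 * (n:ℝ) ^ 2))
        ≤ ∫ t in t0..t1, ℓ ^ 2 * P.inf' hPne (fun q => (t - q) ^ 2) := by
      rw [intervalIntegral.integral_const_mul]
      exact mul_le_mul_of_nonneg_left (qs_one_dim n P hPne hPcard t0 t1 ht01) (sq_nonneg ℓ)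
    have e3 : (∫ t in Set.Icc t0 t1, (⨅ a : α, ‖M t - (a : EuclideanSpace ℝ (Fin 2))‖ ^ 2))
        = ∫ t in t0..t1, α.inf' Hne (fun a => ‖M t - a‖ ^ 2) := by
      rw [integral_Icc_eq_integral_Ioc, ← intervalIntegral.integral_of_le ht01]
      apply intervalIntegral.integral_congr
      intro t _
      exact qs_inf'_eq_iInf α Hne (fun a => ‖M t - a‖ ^ 2)
    rw [e3]
    refine le_trans ?_ (le_trans hlow hmono)
    rw [htS]
    apply le_of_eq
    ring
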